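/- Fix an integer m ≥ 3, an integer ℓ with 1 ≤ ℓ ≤ m−1, a ∈ ℂ^m, and λ ∈ ℂ. If u_1 and u_2 are both nonconstant entire solutions of −u''(z) + V_a(z)·u(z) = λ·u(z) that tend to 0 as r → +∞ along both rays z = r e^{iθ}, θ = −π/2 ± (ℓ+1)π/(m+2), then u_1 and u_2 are linearly dependent: there exists c ∈ ℂ with u_2(z) = c·u_1(z) for all z ∈ ℂ (the geometric multiplicity of every eigenvalue of H_ℓ is 1). -/

import Mathlib

open Complex Real Filter Set

noncomputable section

/-- `Ppoly m a z = a₁ z^(m-1) + a₂ z^(m-2) + ⋯ + a_m`. -/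
def Ppoly (m : ℕ) (a : Fin m → ℂ) (z : ℂ) : ℂ :=
  ∑ i : Fin m, a i * z ^ (m - 1 - (i : ℕ))

/-- The potential `V_a(z) = (-1)^ℓ (iz)^m - P(iz)`. -/
def Vpot (m ℓ : ℕ) (a : Fin m → ℂ) (z : ℂ) : ℂ :=
  (-1) ^ ℓ * (Complex.I * z) ^ m - Ppoly m a (Complex.I * z)

/-- `u` is an eigenfunction of `H_ℓ` (coefficient vector `a`) with eigenvalue `lam`:
a nonconstant entire solution of `-u'' + V_a u = lam·u` decaying along the two rays
`arg z = -π/2 ± (ℓ+1)π/(m+2)`. -/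
def IsEigenfunction (m ℓ : ℕ) (a : Fin m → ℂ) (lam : ℂ) (u : ℂ → ℂ) : Prop :=
  Differentiable ℂ u ∧ (∃ z w : ℂ, u z ≠ u w) ∧
  (∀ z : ℂ, -(deriv (deriv u) z) + Vpot m ℓ a z * u z = lam * u z) ∧
  Tendsto (fun r : ℝ => u (r * Complex.exp ((-(π/2) + (ℓ+1)*π/(m+2) : ℝ) * Complex.I)))
    atTop (nhds 0) ∧
  Tendsto (fun r : ℝ => u (r * Complex.exp ((-(π/2) - (ℓ+1)*π/(m+2) : ℝ) * Complex.I)))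
    atTop (nhds 0)

/-- `lam` is an eigenvalue of `H_ℓ` with coefficient vector `a`. -/
def IsEigenvalue (m ℓ : ℕ) (a : Fin m → ℂ) (lam : ℂ) : Prop :=
  ∃ u : ℂ → ℂ, IsEigenfunction m ℓ a lam u

/-- An admissible enumeration `(lam n)_{n ≥ N0}` of the eigenvalues of `H_ℓ`:
each `lam n` is an eigenvalue, the map is injective, moduli are nondecreasing, and
all but finitely many eigenvalues occur among the `lam n`. -/
def AdmissibleEnum (m ℓ : ℕ) (a : Fin m → ℂ) (N0 : ℤ) (lam : ℤ → ℂ) : Prop :=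
  (∀ n : ℤ, N0 ≤ n → IsEigenvalue m ℓ a (lam n)) ∧
  (∀ n₁ n₂ : ℤ, N0 ≤ n₁ → N0 ≤ n₂ → lam n₁ = lam n₂ → n₁ = n₂) ∧
  (∀ n : ℤ, N0 ≤ n → ‖lam n‖ ≤ ‖lam (n+1)‖) ∧
  {μ : ℂ | IsEigenvalue m ℓ a μ ∧ ∀ n : ℤ, N0 ≤ n → lam n ≠ μ}.Finite

private lemma entire_deriv {f : ℂ → ℂ} (hf : Differentiable ℂ f) :
    Differentiable ℂ (deriv f) := by
  have h : AnalyticOnNhd ℂ f univ := hf.differentiableOn.analyticOnNhd isOpen_univ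
  exact differentiableOn_univ.mp h.deriv.differentiableOn

private lemma hasDerivAt_re' {f f' : ℝ → ℂ} (hf : ∀ r, HasDerivAt f (f' r) r) (r : ℝ) :
    HasDerivAt (fun s => (f s).re) ((f' r).re) r := by
  simpa [Function.comp_def] using Complex.reCLM.hasFDerivAt.comp_hasDerivAt r (hf r)

private lemma hasDerivAt_im' {f f' : ℝ → ℂ} (hf : ∀ r, HasDerivAt f (f' r) r) (r : ℝ) :
    HasDerivAt (fun s => (f s).im) ((f' r).im) r := by
  simpa [Function.comp_def] using Complex.imCLM.hasFDerivAt.comp_hasDerivAt r (hf r)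

private lemma decayL2 (F F₁ q : ℝ → ℂ) (R : ℝ)
    (hF : ∀ r, HasDerivAt F (F₁ r) r)
    (hF₁ : ∀ r, HasDerivAt F₁ (q r * F r) r)
    (hq : ∀ r, R ≤ r → 0 ≤ (q r).re) (hqc : Continuous q)
    (hF0 : Tendsto F atTop (nhds 0)) :
    ∃ A : ℝ, 0 ≤ A ∧ ∀ R' T : ℝ, R ≤ R' → R' ≤ T →
      (∫ r in R'..T, Complex.normSq (F₁ r)) ≤ A := by
  have hFd : Differentiable ℝ F := fun r => (hF r).differentiableAt
  have hF₁d : Differentiable ℝ F₁ := fun r => (hF₁ r).differentiableAt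
  have hFc : Continuous F := hFd.continuous
  have hF₁c : Continuous F₁ := hF₁d.continuous
  set φ : ℝ → ℝ := fun r => (F r).re * (F₁ r).re + (F r).im * (F₁ r).im with hφdef
  have hφ : ∀ r, HasDerivAt φ (Complex.normSq (F₁ r) + (q r).re * Complex.normSq (F r)) r := by
    intro r
    have h := ((hasDerivAt_re' hF r).mul (hasDerivAt_re' hF₁ r)).add
      ((hasDerivAt_im' hF r).mul (hasDerivAt_im' hF₁ r))
    refine h.congr_deriv ?_
    simp only [Complex.normSq_apply, Complex.mul_re, Complex.mul_im]
    ring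
  have hφc : Continuous φ := by
    apply Continuous.add <;> apply Continuous.mul <;> fun_prop
  have hφmono : MonotoneOn φ (Ici R) := by
    apply monotoneOn_of_deriv_nonneg (convex_Ici R) hφc.continuousOn
    · exact fun x _ => (hφ x).differentiableAt.differentiableWithinAt
    · intro x hx
      rw [interior_Ici] at hx
      rw [(hφ x).deriv]
      exact add_nonneg (Complex.normSq_nonneg _)
        (mul_nonneg (hq x hx.le) (Complex.normSq_nonneg _))
  set h : ℝ → ℝ := fun r => Complex.normSq (F r) with hhdef
  have hh : ∀ r, HasDerivAt h (2 * φ r) r := by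
    intro r
    have hd := ((hasDerivAt_re' hF r).mul (hasDerivAt_re' hF r)).add
      ((hasDerivAt_im' hF r).mul (hasDerivAt_im' hF r))
    refine hd.congr_deriv ?_
    simp only [hφdef, Complex.normSq_apply]
    ring
  have hh0 : Tendsto h atTop (nhds 0) := by
    have := (Complex.continuous_normSq.tendsto 0).comp hF0
    simpa [Function.comp_def] using this
  have hφle : ∀ r, R ≤ r → φ r ≤ 0 := by
    intro r₀ hr₀
    by_contra hpos
    push_neg at hpos
    have key : ∀ r, r₀ ≤ r → h r₀ + 2 * φ r₀ * (r - r₀) ≤ h r := by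
      intro r hr
      have hkmono : MonotoneOn (fun s => h s - 2 * φ r₀ * s) (Ici r₀) := by
        have hk : ∀ x : ℝ, HasDerivAt (fun s => h s - 2 * φ r₀ * s) (2 * φ x - 2 * φ r₀) x := by
          intro x
          have := (hh x).sub ((hasDerivAt_id x).const_mul (2 * φ r₀))
          simpa [Pi.sub_def] using this
        apply monotoneOn_of_deriv_nonneg (convex_Ici r₀)
        · exact Continuous.continuousOn (by
            have hhc : Continuous h := Complex.continuous_normSq.comp hFc
            exact hhc.sub (continuous_const.mul continuous_id))
        · intro x _
          exact (hk x).differentiableAt.differentiableWithinAt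
        · intro x hx
          rw [interior_Ici] at hx
          rw [(hk x).deriv]
          have hmono := hφmono hr₀ (mem_Ici.mpr (hr₀.trans hx.le)) hx.le
          linarith
      have := hkmono (self_mem_Ici) (mem_Ici.mpr hr) hr
      simp only at this
      linarith
    obtain ⟨r, hr1, hr2⟩ := ((hh0.eventually_lt_const hpos).and
      (eventually_ge_atTop (r₀ + 1))).exists
    have h1 := key r (by linarith)
    have h2 : 0 ≤ h r₀ := Complex.normSq_nonneg _
    nlinarith
  refine ⟨-φ R, by linarith [hφle R le_rfl], ?_⟩
  intro R' T hR' hT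
  have hcont : Continuous fun r => Complex.normSq (F₁ r) + (q r).re * Complex.normSq (F r) :=
    (Complex.continuous_normSq.comp hF₁c).add
      ((Complex.continuous_re.comp hqc).mul (Complex.continuous_normSq.comp hFc))
  have heq : (∫ r in R'..T, (Complex.normSq (F₁ r) + (q r).re * Complex.normSq (F r)))
      = φ T - φ R' :=
    intervalIntegral.integral_eq_sub_of_hasDerivAt (fun x _ => hφ x)
      (hcont.intervalIntegrable _ _)
  have hmono : (∫ r in R'..T, Complex.normSq (F₁ r))
      ≤ ∫ r in R'..T, (Complex.normSq (F₁ r) + (q r).re * Complex.normSq (F r)) := by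
    apply intervalIntegral.integral_mono_on hT
      ((Complex.continuous_normSq.comp hF₁c).intervalIntegrable _ _)
      (hcont.intervalIntegrable _ _)
    intro x hx
    exact le_add_of_nonneg_right (mul_nonneg (hq x (hR'.trans hx.1)) (Complex.normSq_nonneg _))
  have h1 : φ T ≤ 0 := hφle T (hR'.trans hT)
  have h2 : φ R ≤ φ R' := hφmono self_mem_Ici (mem_Ici.mpr hR') hR'
  linarith

private lemma wronskian_eq_zero (F G F₁ G₁ q : ℝ → ℂ) (c : ℂ) (R : ℝ)
    (hF : ∀ r, HasDerivAt F (F₁ r) r) (hF₁ : ∀ r, HasDerivAt F₁ (q r * F r) r)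
    (hG : ∀ r, HasDerivAt G (G₁ r) r) (hG₁ : ∀ r, HasDerivAt G₁ (q r * G r) r)
    (hq : ∀ r, R ≤ r → 0 ≤ (q r).re) (hqc : Continuous q)
    (hF0 : Tendsto F atTop (nhds 0)) (hG0 : Tendsto G atTop (nhds 0))
    (hW : ∀ r : ℝ, F r * G₁ r - G r * F₁ r = c) : c = 0 := by
  have hFd : Differentiable ℝ F := fun r => (hF r).differentiableAt
  have hGd : Differentiable ℝ G := fun r => (hG r).differentiableAt
  have hF₁d : Differentiable ℝ F₁ := fun r => (hF₁ r).differentiableAt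
  have hG₁d : Differentiable ℝ G₁ := fun r => (hG₁ r).differentiableAt
  have hFc : Continuous F := hFd.continuous
  have hGc : Continuous G := hGd.continuous
  have hF₁c : Continuous F₁ := hF₁d.continuous
  have hG₁c : Continuous G₁ := hG₁d.continuous
  obtain ⟨A, hA0, hA⟩ := decayL2 F F₁ q R hF hF₁ hq hqc hF0
  obtain ⟨B, hB0, hB⟩ := decayL2 G G₁ q R hG hG₁ hq hqc hG0
  by_contra hc
  have hcpos : 0 < ‖c‖ := norm_pos_iff.mpr hc
  set ε : ℝ := ‖c‖ / 8 with hεdef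
  have hεpos : 0 < ε := by positivity
  have hev : ∀ᶠ r in atTop, ‖F r‖ ≤ ε ∧ ‖G r‖ ≤ ε := by
    have h1 : Tendsto (fun r => ‖F r‖) atTop (nhds 0) := by simpa using hF0.norm
    have h2 : Tendsto (fun r => ‖G r‖) atTop (nhds 0) := by simpa using hG0.norm
    exact (h1.eventually_le_const hεpos).and (h2.eventually_le_const hεpos)
  obtain ⟨R₁, hR₁⟩ := eventually_atTop.mp hev
  set R' : ℝ := max R R₁ with hR'def
  set M : ℝ := max 1 ((A + B) / 2) with hMdef
  set T : ℝ := R' + M with hTdef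
  have hone : (1 : ℝ) ≤ M := le_max_left _ _
  have hM2 : (A + B) / 2 ≤ M := le_max_right _ _
  have hTR : T - R' = M := by rw [hTdef]; ring
  have hTR1 : (1 : ℝ) ≤ T - R' := by rw [hTR]; exact hone
  have hR'T : R' ≤ T := by linarith
  have hRR' : R ≤ R' := le_max_left _ _
  -- pointwise estimate
  have hnorm_le : ∀ x : ℂ, ‖x‖ ≤ (1 + Complex.normSq x) / 2 := by
    intro x
    have h1 : Complex.normSq x = ‖x‖ ^ 2 := by
      rw [Complex.normSq_eq_norm_sq]
    nlinarith [sq_nonneg (‖x‖ - 1)]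
  have hpt : ∀ x ∈ Icc R' T, ‖F x * G₁ x - G x * F₁ x‖
      ≤ ε / 2 * (2 + Complex.normSq (F₁ x) + Complex.normSq (G₁ x)) := by
    intro x hx
    obtain ⟨hFx, hGx⟩ := hR₁ x (le_trans (le_max_right R R₁) hx.1)
    have e1 : ‖F x * G₁ x - G x * F₁ x‖ ≤ ‖F x‖ * ‖G₁ x‖ + ‖G x‖ * ‖F₁ x‖ := by
      refine (norm_sub_le _ _).trans ?_
      rw [norm_mul, norm_mul]
    have e2 : ‖F x‖ * ‖G₁ x‖ ≤ ε * ((1 + Complex.normSq (G₁ x)) / 2) :=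
      mul_le_mul hFx (hnorm_le _) (norm_nonneg _) hεpos.le
    have e3 : ‖G x‖ * ‖F₁ x‖ ≤ ε * ((1 + Complex.normSq (F₁ x)) / 2) :=
      mul_le_mul hGx (hnorm_le _) (norm_nonneg _) hεpos.le
    calc ‖F x * G₁ x - G x * F₁ x‖ ≤ ‖F x‖ * ‖G₁ x‖ + ‖G x‖ * ‖F₁ x‖ := e1
      _ ≤ ε * ((1 + Complex.normSq (G₁ x)) / 2) + ε * ((1 + Complex.normSq (F₁ x)) / 2) := by
          linarith
      _ = ε / 2 * (2 + Complex.normSq (F₁ x) + Complex.normSq (G₁ x)) := by ring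
  -- integral computations
  have hiF : IntervalIntegrable (fun r => Complex.normSq (F₁ r)) MeasureTheory.volume R' T :=
    (Complex.continuous_normSq.comp hF₁c).intervalIntegrable _ _
  have hiG : IntervalIntegrable (fun r => Complex.normSq (G₁ r)) MeasureTheory.volume R' T :=
    (Complex.continuous_normSq.comp hG₁c).intervalIntegrable _ _
  have h2 : (∫ r in R'..T, (F r * G₁ r - G r * F₁ r)) = (T - R') • c := by
    rw [intervalIntegral.integral_congr (g := fun _ => c) (fun x _ => hW x)]
    simp
  have h1 : ‖∫ r in R'..T, (F r * G₁ r - G r * F₁ r)‖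
      ≤ ∫ r in R'..T, ε / 2 * (2 + Complex.normSq (F₁ r) + Complex.normSq (G₁ r)) := by
    refine le_trans (intervalIntegral.norm_integral_le_integral_norm hR'T) ?_
    apply intervalIntegral.integral_mono_on hR'T
    · exact (((hFc.mul hG₁c).sub (hGc.mul hF₁c)).norm).intervalIntegrable _ _
    · exact ((continuous_const.mul ((continuous_const.add
        (Complex.continuous_normSq.comp hF₁c)).add
        (Complex.continuous_normSq.comp hG₁c)))).intervalIntegrable _ _
    · exact hpt
  have h3 : (∫ r in R'..T, ε / 2 * (2 + Complex.normSq (F₁ r) + Complex.normSq (G₁ r)))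
      = ε / 2 * ((T - R') * 2 + (∫ r in R'..T, Complex.normSq (F₁ r))
          + (∫ r in R'..T, Complex.normSq (G₁ r))) := by
    rw [intervalIntegral.integral_const_mul]
    congr 1
    have i1 : IntervalIntegrable (fun x => 2 + Complex.normSq (F₁ x)) MeasureTheory.volume R' T :=
      Continuous.intervalIntegrable (by
        exact continuous_const.add (Complex.continuous_normSq.comp hF₁c)) _ _
    have i0 : IntervalIntegrable (fun _ : ℝ => (2:ℝ)) MeasureTheory.volume R' T :=
      Continuous.intervalIntegrable continuous_const _ _
    rw [intervalIntegral.integral_add i1 hiG, intervalIntegral.integral_add i0 hiF]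
    simp
    try ring
  have hAle := hA R' T hRR' hR'T
  have hBle := hB R' T hRR' hR'T
  have hABle : A + B ≤ (T - R') * 2 := by rw [hTR]; linarith
  have hsmul : ‖(T - R') • c‖ = (T - R') * ‖c‖ := by
    rw [norm_smul, Real.norm_eq_abs, _root_.abs_of_nonneg (by linarith : (0:ℝ) ≤ T - R')]
  have hfinal : (T - R') * ‖c‖ ≤ ε / 2 * ((T - R') * 2 + A + B) := by
    rw [← hsmul, ← h2]
    refine h1.trans ?_
    rw [h3]
    have : (0:ℝ) ≤ ε / 2 := by positivity
    nlinarith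
  have hstep : ε / 2 * ((T - R') * 2 + A + B) ≤ ε / 2 * ((T - R') * 4) :=
    mul_le_mul_of_nonneg_left (by linarith) (by positivity)
  have hfinal2 : (T - R') * ‖c‖ ≤ ‖c‖ / 4 * (T - R') := by
    calc (T - R') * ‖c‖ ≤ ε / 2 * ((T - R') * 4) := hfinal.trans hstep
      _ = ‖c‖ / 4 * (T - R') := by rw [hεdef]; ring
  nlinarith [hcpos, hTR1]
private lemma phase_key (m ℓ : ℕ) :
    ((-1 : ℂ)) ^ ℓ * I ^ m *
      Complex.exp (((-(π/2) + (ℓ+1)*π/(m+2) : ℝ) : ℂ) * I) ^ (m + 2) = 1 := by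
  set θ : ℝ := -(π/2) + (ℓ+1)*π/(m+2) with hθ
  have hm2 : ((m : ℝ) + 2) ≠ 0 := by positivity
  have hreal : ((m:ℝ)+2) * θ = (-(π/2)) * ((m:ℝ)+2) + π * ((ℓ:ℝ)+1) := by
    rw [hθ]; field_simp
  have hC : ((m:ℂ)+2) * (θ:ℂ) = ((-(π/2) : ℝ):ℂ) * ((m:ℂ)+2) + (π:ℂ) * ((ℓ:ℂ)+1) := by
    have h := congrArg (fun x : ℝ => (x : ℂ)) hreal
    push_cast at h ⊢
    linear_combination h
  rw [← Complex.exp_nat_mul]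
  have harg : (((m+2:ℕ)):ℂ) * ((θ:ℂ)*I)
      = (((m+2:ℕ)):ℂ) * (((-(π/2):ℝ):ℂ) * I) + (((ℓ+1:ℕ)):ℂ) * ((π:ℂ)*I) := by
    push_cast at hC ⊢
    linear_combination I * hC
  rw [harg, Complex.exp_add, Complex.exp_nat_mul, Complex.exp_nat_mul]
  have e1 : Complex.exp (((-(π/2):ℝ):ℂ) * I) = -I := by
    rw [Complex.exp_mul_I]
    push_cast
    rw [Complex.cos_neg, Complex.sin_neg]
    rw [show ((π : ℂ)/2) = ((π/2 : ℝ) : ℂ) by push_cast; ring]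
    rw [← Complex.ofReal_cos, ← Complex.ofReal_sin]
    rw [Real.cos_pi_div_two, Real.sin_pi_div_two]
    simp
  have e2 : Complex.exp ((π:ℂ) * I) = -1 := Complex.exp_pi_mul_I
  rw [e1, e2]
  have h1 : ((-1 : ℂ)) ^ ℓ * (-1 : ℂ) ^ (ℓ + 1) = -1 := by
    rw [pow_succ, ← mul_assoc, ← mul_pow]
    norm_num
  have h2 : (I : ℂ) ^ m * (-I) ^ (m + 2) = -1 := by
    rw [pow_add, ← mul_assoc, ← mul_pow]
    have hI : (I : ℂ) * -I = 1 := by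
      rw [mul_neg, Complex.I_mul_I]; norm_num
    rw [hI, one_pow]
    have hI2 : (-I : ℂ) ^ 2 = -1 := by
      rw [neg_pow, Complex.I_sq]; norm_num
    rw [hI2]; ring
  calc ((-1 : ℂ)) ^ ℓ * I ^ m * ((-I) ^ (m + 2) * (-1 : ℂ) ^ (ℓ + 1))
      = (((-1 : ℂ)) ^ ℓ * (-1 : ℂ) ^ (ℓ + 1)) * ((I : ℂ) ^ m * (-I) ^ (m + 2)) := by ring
    _ = 1 := by rw [h1, h2]; norm_num

private lemma q_re_nonneg (m ℓ : ℕ) (hm : 3 ≤ m) (a : Fin m → ℂ) (lam : ℂ) :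
    ∃ R : ℝ, ∀ r : ℝ, R ≤ r →
      0 ≤ (Complex.exp (((-(π/2) + (ℓ+1)*π/(m+2) : ℝ) : ℂ) * I) ^ 2
        * (Vpot m ℓ a ((r : ℂ) * Complex.exp (((-(π/2) + (ℓ+1)*π/(m+2) : ℝ) : ℂ) * I)) - lam)).re := by
  set θ : ℝ := -(π/2) + (ℓ+1)*π/(m+2) with hθ
  set ω : ℂ := Complex.exp ((θ : ℂ) * I) with hω
  have hωabs : ‖ω‖ = 1 := Complex.norm_exp_ofReal_mul_I θ
  set C₀ : ℝ := (∑ i : Fin m, ‖a i‖) + ‖lam‖ with hC₀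
  have hsum0 : (0:ℝ) ≤ ∑ i : Fin m, ‖a i‖ :=
    Finset.sum_nonneg fun i _ => norm_nonneg _
  have hC₀0 : 0 ≤ C₀ := by
    rw [hC₀]; positivity
  refine ⟨max 1 C₀, fun r hr => ?_⟩
  have hr1 : (1 : ℝ) ≤ r := le_trans (le_max_left _ _) hr
  have hrC : C₀ ≤ r := le_trans (le_max_right _ _) hr
  have hr0 : (0 : ℝ) < r := lt_of_lt_of_le zero_lt_one hr1
  have hkey := phase_key m ℓ
  rw [← hθ, ← hω] at hkey
  have hq : ω ^ 2 * (Vpot m ℓ a ((r : ℂ) * ω) - lam)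
      = (r : ℂ) ^ m - ω ^ 2 * (Ppoly m a (I * ((r : ℂ) * ω)) + lam) := by
    rw [Vpot]
    rw [show (I * ((r : ℂ) * ω)) ^ m = I ^ m * (r : ℂ) ^ m * ω ^ m by
      rw [mul_pow, mul_pow]; ring]
    rw [pow_add] at hkey
    linear_combination (r : ℂ) ^ m * hkey
  rw [hq]
  have hpow1 : (1:ℝ) ≤ r ^ (m - 1) := one_le_pow₀ hr1
  have habs : ‖ω ^ 2 * (Ppoly m a (I * ((r : ℂ) * ω)) + lam)‖ ≤ C₀ * r ^ (m - 1) := by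
    rw [norm_mul, norm_pow, hωabs]
    simp only [one_pow, one_mul]
    refine le_trans (norm_add_le _ _) ?_
    have hzabs : ‖I * ((r : ℂ) * ω)‖ = r := by
      rw [norm_mul, norm_mul, Complex.norm_I, hωabs, Complex.norm_real, Real.norm_eq_abs,
        _root_.abs_of_nonneg hr0.le]
      ring
    have hP : ‖Ppoly m a (I * ((r : ℂ) * ω))‖
        ≤ (∑ i : Fin m, ‖a i‖) * r ^ (m - 1) := by
      rw [Ppoly]
      refine le_trans (norm_sum_le _ _) ?_
      rw [Finset.sum_mul]
      refine Finset.sum_le_sum fun i _ => ?_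
      rw [norm_mul, norm_pow, hzabs]
      refine mul_le_mul_of_nonneg_left ?_ (norm_nonneg _)
      exact pow_le_pow_right₀ hr1 (Nat.sub_le _ _)
    have hlam : ‖lam‖ ≤ ‖lam‖ * r ^ (m - 1) :=
      le_mul_of_one_le_right (norm_nonneg _) hpow1
    rw [hC₀, add_mul]
    exact add_le_add hP hlam
  have hre : ((r : ℂ) ^ m - ω ^ 2 * (Ppoly m a (I * ((r : ℂ) * ω)) + lam)).re
      = r ^ m - (ω ^ 2 * (Ppoly m a (I * ((r : ℂ) * ω)) + lam)).re := by
    rw [Complex.sub_re, ← Complex.ofReal_pow, Complex.ofReal_re]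
  rw [hre]
  have hwre : (ω ^ 2 * (Ppoly m a (I * ((r : ℂ) * ω)) + lam)).re
      ≤ C₀ * r ^ (m - 1) := le_trans (Complex.re_le_norm _) habs
  have hm1 : m - 1 + 1 = m := by omega
  have hrm : r ^ m = r ^ (m - 1) * r := by
    conv_lhs => rw [← hm1]
    rw [pow_succ]
  have : C₀ * r ^ (m - 1) ≤ r ^ m := by
    rw [hrm]
    have h0 : (0:ℝ) ≤ r ^ (m-1) := pow_nonneg hr0.le _
    nlinarith
  linarith
/-- The geometric multiplicity of every eigenvalue of `H_ℓ` is one: any two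
eigenfunctions associated with the same eigenvalue are linearly dependent. -/
theorem geometric_multiplicity_one (m ℓ : ℕ) (hm : 3 ≤ m) (hℓ1 : 1 ≤ ℓ) (hℓ2 : ℓ ≤ m - 1)
    (a : Fin m → ℂ) (lam : ℂ) (u₁ u₂ : ℂ → ℂ)
    (h₁ : IsEigenfunction m ℓ a lam u₁) (h₂ : IsEigenfunction m ℓ a lam u₂) :
    ∃ c : ℂ, ∀ z : ℂ, u₂ z = c * u₁ z := by
  obtain ⟨hu₁, hnc₁, hode₁, hray₁, -⟩ := h₁
  obtain ⟨hu₂, hnc₂, hode₂, hray₂, -⟩ := h₂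
  have hu₁' : Differentiable ℂ (deriv u₁) := entire_deriv hu₁
  have hu₂' : Differentiable ℂ (deriv u₂) := entire_deriv hu₂
  have hdd₁ : ∀ z, deriv (deriv u₁) z = (Vpot m ℓ a z - lam) * u₁ z := by
    intro z; linear_combination -hode₁ z
  have hdd₂ : ∀ z, deriv (deriv u₂) z = (Vpot m ℓ a z - lam) * u₂ z := by
    intro z; linear_combination -hode₂ z
  -- The Wronskian is constant
  set W : ℂ → ℂ := fun z => u₁ z * deriv u₂ z - u₂ z * deriv u₁ z with hWdef
  have hWd : ∀ z, HasDerivAt W 0 z := by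
    intro z
    have h := ((hu₁ z).hasDerivAt.mul (hu₂' z).hasDerivAt).sub
      ((hu₂ z).hasDerivAt.mul (hu₁' z).hasDerivAt)
    refine h.congr_deriv ?_
    rw [hdd₁ z, hdd₂ z]
    ring
  have hWconst : ∀ z, W z = W 0 := fun z =>
    is_const_of_deriv_eq_zero (𝕜 := ℂ) (fun y => (hWd y).differentiableAt)
      (fun y => (hWd y).deriv) z 0
  -- setup along the ray
  set θ : ℝ := -(π/2) + (ℓ+1)*π/(m+2) with hθ
  set ω : ℂ := Complex.exp ((θ : ℂ) * I) with hω
  obtain ⟨R, hR⟩ := q_re_nonneg m ℓ hm a lam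
  rw [← hθ] at hR
  rw [← hω] at hR
  have hVc : Continuous (Vpot m ℓ a) := by
    unfold Vpot Ppoly
    apply Continuous.sub
    · exact continuous_const.mul ((continuous_const.mul continuous_id).pow m)
    · apply continuous_finset_sum
      intro i _
      exact continuous_const.mul ((continuous_const.mul continuous_id).pow _)
  set q : ℝ → ℂ := fun r => ω ^ 2 * (Vpot m ℓ a ((r : ℂ) * ω) - lam) with hqdef
  have hqc : Continuous q :=
    continuous_const.mul ((hVc.comp (Complex.continuous_ofReal.mul continuous_const)).sub
      continuous_const)
  set F : ℝ → ℂ := fun r => u₁ ((r : ℂ) * ω) with hFdef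
  set F₁ : ℝ → ℂ := fun r => ω * deriv u₁ ((r : ℂ) * ω) with hF₁def
  set G : ℝ → ℂ := fun r => u₂ ((r : ℂ) * ω) with hGdef
  set G₁ : ℝ → ℂ := fun r => ω * deriv u₂ ((r : ℂ) * ω) with hG₁def
  have hFd : ∀ r : ℝ, HasDerivAt F (F₁ r) r := by
    intro r
    have h1 : HasDerivAt (fun z : ℂ => u₁ (z * ω)) (deriv u₁ ((r : ℂ) * ω) * ω) (r : ℂ) :=
      HasDerivAt.comp (r : ℂ) (hu₁ _).hasDerivAt (hasDerivAt_mul_const ω)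
    have h2 := h1.comp_ofReal
    simp only [hFdef, hF₁def]
    convert h2 using 1
    ring
  have hGd : ∀ r : ℝ, HasDerivAt G (G₁ r) r := by
    intro r
    have h1 : HasDerivAt (fun z : ℂ => u₂ (z * ω)) (deriv u₂ ((r : ℂ) * ω) * ω) (r : ℂ) :=
      HasDerivAt.comp (r : ℂ) (hu₂ _).hasDerivAt (hasDerivAt_mul_const ω)
    have h2 := h1.comp_ofReal
    simp only [hGdef, hG₁def]
    convert h2 using 1
    ring
  have hF₁d : ∀ r : ℝ, HasDerivAt F₁ (q r * F r) r := by
    intro r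
    have h1 : HasDerivAt (fun z : ℂ => deriv u₁ (z * ω))
        (deriv (deriv u₁) ((r : ℂ) * ω) * ω) (r : ℂ) :=
      HasDerivAt.comp (r : ℂ) (hu₁' _).hasDerivAt (hasDerivAt_mul_const ω)
    have h2 := (h1.const_mul ω).comp_ofReal
    simp only [hF₁def, hFdef, hqdef]
    convert h2 using 1
    rw [hdd₁ ((r : ℂ) * ω)]
    ring
  have hG₁d : ∀ r : ℝ, HasDerivAt G₁ (q r * G r) r := by
    intro r
    have h1 : HasDerivAt (fun z : ℂ => deriv u₂ (z * ω))
        (deriv (deriv u₂) ((r : ℂ) * ω) * ω) (r : ℂ) :=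
      HasDerivAt.comp (r : ℂ) (hu₂' _).hasDerivAt (hasDerivAt_mul_const ω)
    have h2 := (h1.const_mul ω).comp_ofReal
    simp only [hG₁def, hGdef, hqdef]
    convert h2 using 1
    rw [hdd₂ ((r : ℂ) * ω)]
    ring
  have hWline : ∀ r : ℝ, F r * G₁ r - G r * F₁ r = ω * W 0 := by
    intro r
    have hcw := hWconst ((r : ℂ) * ω)
    calc F r * G₁ r - G r * F₁ r = ω * W ((r : ℂ) * ω) := by
          simp only [hFdef, hF₁def, hGdef, hG₁def, hWdef]; ring
      _ = ω * W 0 := by rw [hcw]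
  have hc0 : ω * W 0 = 0 :=
    wronskian_eq_zero F G F₁ G₁ q (ω * W 0) R hFd hF₁d hGd hG₁d hR hqc hray₁ hray₂ hWline
  have hW0 : ∀ z, W z = 0 := by
    intro z
    rw [hWconst z]
    exact (mul_eq_zero.mp hc0).resolve_left (Complex.exp_ne_zero _)
  -- choose a point where u₁ ≠ 0
  obtain ⟨z, w, hzw⟩ := hnc₁
  have hex : ∃ z₀, u₁ z₀ ≠ 0 := by
    by_cases h : u₁ z = 0
    · exact ⟨w, fun hw => hzw (by rw [h, hw])⟩
    · exact ⟨z, h⟩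
  obtain ⟨z₀, hz₀⟩ := hex
  set c : ℂ := u₂ z₀ / u₁ z₀ with hcdef
  refine ⟨c, ?_⟩
  have hopen : IsOpen {y : ℂ | u₁ y ≠ 0} := by
    have : {y : ℂ | u₁ y ≠ 0} = u₁ ⁻¹' ({0}ᶜ) := rfl
    rw [this]
    exact (isOpen_compl_singleton).preimage hu₁.continuous
  obtain ⟨δ, hδ, hball⟩ := Metric.isOpen_iff.mp hopen z₀ hz₀
  have hψ : ∀ y ∈ Metric.ball z₀ δ, u₂ y = c * u₁ y := by
    intro y hy
    have hseg : ∀ t : ℝ, t ∈ Icc (0:ℝ) 1 → z₀ + (t : ℂ) * (y - z₀) ∈ Metric.ball z₀ δ := by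
      intro t ht
      rw [Metric.mem_ball, dist_eq_norm]
      have he : z₀ + (t : ℂ) * (y - z₀) - z₀ = (t : ℂ) * (y - z₀) := by ring
      rw [he, norm_mul, Complex.norm_real, Real.norm_eq_abs,
        _root_.abs_of_nonneg ht.1]
      have hyd : ‖y - z₀‖ < δ := by rwa [Metric.mem_ball, dist_eq_norm] at hy
      calc t * ‖y - z₀‖ ≤ 1 * ‖y - z₀‖ :=
            mul_le_mul_of_nonneg_right ht.2 (norm_nonneg _)
        _ = ‖y - z₀‖ := one_mul _
        _ < δ := hyd
    set k : ℝ → ℂ := fun t => u₂ (z₀ + (t : ℂ) * (y - z₀)) / u₁ (z₀ + (t : ℂ) * (y - z₀))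
      with hkdef
    have hkd : ∀ t ∈ Icc (0:ℝ) 1, HasDerivAt k 0 t := by
      intro t ht
      have hne : u₁ (z₀ + (t : ℂ) * (y - z₀)) ≠ 0 := hball (hseg t ht)
      set p : ℂ := z₀ + (t : ℂ) * (y - z₀) with hpdef
      have hψd : HasDerivAt (fun w : ℂ => u₂ w / u₁ w)
          ((deriv u₂ p * u₁ p - u₂ p * deriv u₁ p) / u₁ p ^ 2) p :=
        (hu₂ p).hasDerivAt.div (hu₁ p).hasDerivAt hne
      have hval : (deriv u₂ p * u₁ p - u₂ p * deriv u₁ p) / u₁ p ^ 2 = 0 := by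
        have := hW0 p
        simp only [hWdef] at this
        rw [div_eq_zero_iff]
        left
        linear_combination this
      have haff : HasDerivAt (fun w : ℂ => z₀ + w * (y - z₀)) (y - z₀) (t : ℂ) :=
        (hasDerivAt_mul_const (y - z₀)).const_add z₀
      rw [hval] at hψd
      have hcomp := (HasDerivAt.comp (t : ℂ) hψd haff).comp_ofReal
      rw [zero_mul] at hcomp
      exact hcomp
    have hkc : ContinuousOn k (Icc 0 1) := fun t ht =>
      (hkd t ht).differentiableAt.continuousAt.continuousWithinAt
    have hk10 := constant_of_has_deriv_right_zero hkc
      (fun t ht => (hkd t (Ico_subset_Icc_self ht)).hasDerivWithinAt) 1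
      (right_mem_Icc.mpr zero_le_one)
    have hk1 : u₂ y / u₁ y = c := by
      have e1 : z₀ + ((1 : ℝ) : ℂ) * (y - z₀) = y := by push_cast; ring
      have e0 : z₀ + ((0 : ℝ) : ℂ) * (y - z₀) = z₀ := by push_cast; ring
      have := hk10
      simp only [hkdef, e1, e0] at this
      rw [this, hcdef]
    have hne : u₁ y ≠ 0 := hball hy
    rw [← hk1, div_mul_cancel₀ _ hne]
  have hD : AnalyticOnNhd ℂ (fun y => u₂ y - c * u₁ y) univ :=
    ((hu₂.sub (hu₁.const_mul c)).differentiableOn).analyticOnNhd isOpen_univ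
  have hev : (fun y => u₂ y - c * u₁ y) =ᶠ[nhds z₀] 0 := by
    filter_upwards [Metric.ball_mem_nhds z₀ hδ] with y hy
    simp [hψ y hy]
  have hzero := hD.eqOn_zero_of_preconnected_of_eventuallyEq_zero isPreconnected_univ
    (mem_univ z₀) hev
  intro z'
  have hz' := hzero (mem_univ z')
  simpa [sub_eq_zero] using hz'
end
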